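/- For any insertion redex (S,P,T,Γ,σ,τ), the syntactic complexity strictly decreases under insertion of arguments: sc(σ≪P,τ≫) < sc(σ). -/

import Mathlib

universe u

/-- Natural (Hessenberg) sum of ordinals, as `Ordinal.nadd` was defined in Mathlib
(December 2024); it has since been removed from Mathlib. -/
noncomputable def Ordinal.nadd (a b : Ordinal.{u}) : Ordinal.{u} :=
  max (Ordinal.blsub.{u, u} a fun a' _ => Ordinal.nadd a' b)
    (Ordinal.blsub.{u, u} b fun b' _ => Ordinal.nadd a b')
termination_by (a, b)
decreasing_by
  all_goals first
    | exact Prod.Lex.left _ _ (by assumption)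
    | exact Prod.Lex.right _ (by assumption)

infixl:65 " ♯ " => Ordinal.nadd

namespace Ordinal

theorem nadd_def' (a b : Ordinal.{u}) : a ♯ b =
    max (blsub.{u, u} a fun a' _ => a' ♯ b) (blsub.{u, u} b fun b' _ => a ♯ b') := by
  rw [nadd]

theorem lt_nadd_iff {a b c : Ordinal.{u}} :
    a < b ♯ c ↔ (∃ b' < b, a ≤ b' ♯ c) ∨ ∃ c' < c, a ≤ b ♯ c' := by
  rw [nadd_def']; simp [lt_blsub_iff]

theorem nadd_le_iff {a b c : Ordinal.{u}} :
    b ♯ c ≤ a ↔ (∀ b' < b, b' ♯ c < a) ∧ ∀ c' < c, b ♯ c' < a := by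
  rw [nadd_def']; simp [blsub_le_iff]

theorem nadd_lt_nadd_left {b c : Ordinal.{u}} (h : b < c) (a : Ordinal.{u}) : a ♯ b < a ♯ c :=
  lt_nadd_iff.2 (Or.inr ⟨b, h, le_rfl⟩)

theorem nadd_lt_nadd_right {b c : Ordinal.{u}} (h : b < c) (a : Ordinal.{u}) : b ♯ a < c ♯ a :=
  lt_nadd_iff.2 (Or.inl ⟨b, h, le_rfl⟩)

theorem nadd_le_nadd_left {b c : Ordinal.{u}} (h : b ≤ c) (a : Ordinal.{u}) : a ♯ b ≤ a ♯ c := by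
  rcases lt_or_eq_of_le h with (h | rfl)
  · exact (nadd_lt_nadd_left h a).le
  · exact le_rfl

theorem nadd_le_nadd_right {b c : Ordinal.{u}} (h : b ≤ c) (a : Ordinal.{u}) : b ♯ a ≤ c ♯ a := by
  rcases lt_or_eq_of_le h with (h | rfl)
  · exact (nadd_lt_nadd_right h a).le
  · exact le_rfl

theorem lt_of_nadd_lt_nadd_right {a b c : Ordinal.{u}} (h : b ♯ a < c ♯ a) : b < c :=
  lt_of_not_ge fun h' => absurd h (not_lt.2 (nadd_le_nadd_right h' a))

theorem nadd_comm (a b : Ordinal.{u}) : a ♯ b = b ♯ a := by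
  revert b
  refine Ordinal.induction (p := fun a => ∀ b, a ♯ b = b ♯ a) a fun a IHa => ?_
  intro b
  refine Ordinal.induction (p := fun b => a ♯ b = b ♯ a) b fun b IHb => ?_
  apply le_antisymm
  · rw [nadd_le_iff]; constructor
    · intro a' ha'; rw [IHa a' ha' b]; exact nadd_lt_nadd_left ha' b
    · intro b' hb'; rw [IHb b' hb']; exact nadd_lt_nadd_right hb' a
  · rw [nadd_le_iff]; constructor
    · intro b' hb'; rw [← IHb b' hb']; exact nadd_lt_nadd_left hb' a
    · intro a' ha'; rw [← IHa a' ha' b]; exact nadd_lt_nadd_right ha' b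

@[simp]
theorem nadd_zero (a : Ordinal.{u}) : a ♯ 0 = a := by
  refine Ordinal.induction (p := fun a => a ♯ 0 = a) a fun a IH => ?_
  apply le_antisymm
  · rw [nadd_le_iff]
    exact ⟨fun a' ha' => by rw [IH a' ha']; exact ha',
      fun c' hc' => absurd hc' (not_lt.2 (zero_le (a := c')))⟩
  · refine not_lt.1 fun h => ?_
    have := nadd_lt_nadd_right h 0
    rw [IH _ h] at this
    exact lt_irrefl _ this

@[simp]
theorem zero_nadd (a : Ordinal.{u}) : 0 ♯ a = a := by rw [nadd_comm, nadd_zero]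

theorem le_self_nadd {a b : Ordinal.{u}} : a ≤ a ♯ b := by
  have := nadd_le_nadd_left (zero_le (a := b)) a
  rwa [nadd_zero] at this

theorem le_nadd_self {a b : Ordinal.{u}} : a ≤ b ♯ a := by
  have := nadd_le_nadd_right (zero_le (a := b)) a
  rwa [zero_nadd] at this

theorem nadd_assoc (a b c : Ordinal.{u}) : a ♯ b ♯ c = a ♯ (b ♯ c) := by
  revert b c
  refine Ordinal.induction (p := fun a => ∀ b c, a ♯ b ♯ c = a ♯ (b ♯ c)) a fun a IHa => ?_
  intro b
  refine Ordinal.induction (p := fun b => ∀ c, a ♯ b ♯ c = a ♯ (b ♯ c)) b fun b IHb => ?_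
  intro c
  refine Ordinal.induction (p := fun c => a ♯ b ♯ c = a ♯ (b ♯ c)) c fun c IHc => ?_
  apply le_antisymm
  · rw [nadd_le_iff]; constructor
    · intro x hx
      rcases lt_nadd_iff.1 hx with ⟨a', ha', hx⟩ | ⟨b', hb', hx⟩
      · calc x ♯ c ≤ a' ♯ b ♯ c := nadd_le_nadd_right hx c
          _ = a' ♯ (b ♯ c) := IHa a' ha' b c
          _ < a ♯ (b ♯ c) := nadd_lt_nadd_right ha' _
      · calc x ♯ c ≤ a ♯ b' ♯ c := nadd_le_nadd_right hx c
          _ = a ♯ (b' ♯ c) := IHb b' hb' c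
          _ < a ♯ (b ♯ c) := nadd_lt_nadd_left (nadd_lt_nadd_right hb' c) a
    · intro c' hc'
      rw [IHc c' hc']; exact nadd_lt_nadd_left (nadd_lt_nadd_left hc' b) a
  · rw [nadd_le_iff]; constructor
    · intro a' ha'
      rw [← IHa a' ha' b c]; exact nadd_lt_nadd_right (nadd_lt_nadd_right ha' b) c
    · intro x hx
      rcases lt_nadd_iff.1 hx with ⟨b', hb', hx⟩ | ⟨c', hc', hx⟩
      · calc a ♯ x ≤ a ♯ (b' ♯ c) := nadd_le_nadd_left hx a
          _ = a ♯ b' ♯ c := (IHb b' hb' c).symm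
          _ < a ♯ b ♯ c := nadd_lt_nadd_right (nadd_lt_nadd_left hb' a) c
      · calc a ♯ x ≤ a ♯ (b ♯ c') := nadd_le_nadd_left hx a
          _ = a ♯ b ♯ c' := (IHc c' hc').symm
          _ < a ♯ b ♯ c := nadd_lt_nadd_left hc' _

end Ordinal

namespace Catt

/-! ### Finite planar rooted trees -/

abbrev Path := List ℕ

inductive Tree : Type
  | node : List Tree → Tree

/-- The list of child subtrees. -/
def Tree.children : Tree → List Tree
  | .node ts => ts

/-- Trunk height. -/
def Tree.th : Tree → ℕ
  | .node [t] => t.th + 1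
  | _ => 0

/-- Dimension of a tree. -/
def Tree.dim : Tree → ℕ
  | .node [] => 0
  | .node (t :: ts) => max (t.dim + 1) (Tree.dim (.node ts))

/-- A tree is linear when its trunk height equals its dimension. -/
def Tree.linear (T : Tree) : Prop := T.th = T.dim

/-- The linear tree of dimension `n` (the `n`-disc). -/
def discTree : ℕ → Tree
  | 0 => .node []
  | n + 1 => .node [discTree n]

/-- Suspension of a tree. -/
def Tree.susp (T : Tree) : Tree := .node [T]

/-- Subtree of `T` indexed by a list of naturals. -/
def Tree.subtree : List ℕ → Tree → Tree
  | [], T => T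
  | k :: P, T => Tree.subtree P (T.children.getD k (.node []))

/-- Validity of a variable path in (the pasting context generated by) a tree:
a path `k₁ :: ⋯ :: kᵣ :: [j]` descends through children `kᵢ` and ends in the
`j`-th 0-dimensional endpoint of the resulting node. -/
inductive IsPath : Tree → Path → Prop
  | point (ts : List Tree) (j : ℕ) : j ≤ ts.length → IsPath (.node ts) [j]
  | deeper (ts : List Tree) (k : ℕ) (p : Path) : k < ts.length →
      IsPath (ts.getD k (.node [])) p → IsPath (.node ts) (k :: p)

/-- Paths of locally maximal variables. -/
inductive IsMaxPath : Tree → Path → Prop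
  | here : IsMaxPath (.node []) [0]
  | there (ts : List Tree) (k : ℕ) (p : Path) : k < ts.length →
      IsMaxPath (ts.getD k (.node [])) p → IsMaxPath (.node ts) (k :: p)

/-- A branch of a tree: a non-empty index list whose subtree is linear. -/
inductive IsBranch : Tree → List ℕ → Prop
  | here (ts : List Tree) (k : ℕ) : k < ts.length → (ts.getD k (.node [])).linear →
      IsBranch (.node ts) [k]
  | there (ts : List Tree) (k : ℕ) (P : List ℕ) : k < ts.length → P ≠ [] →
      IsBranch (ts.getD k (.node [])) P → IsBranch (.node ts) (k :: P)

/-- The path of the unique locally maximal variable of a linear tree. -/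
def Tree.maxPath : Tree → Path
  | .node [] => [0]
  | .node (t :: _) => 0 :: t.maxPath

/-- The locally maximal variable `⌊P⌋` corresponding to a branch `P` of `S`. -/
def branchVar : List ℕ → Tree → Path
  | [], S => S.maxPath
  | [k], S => k :: (S.children.getD k (.node [])).maxPath
  | k :: P, S => k :: branchVar P (S.children.getD k (.node []))

/-- Branch height `bh(P)`. -/
def bh (P : List ℕ) : ℕ := P.length - 1

/-- Leaf height `lh(P)`, the dimension of `⌊P⌋`. -/
def lh (P : List ℕ) (S : Tree) : ℕ := (branchVar P S).length - 1

/-- The inserted tree `S ≪ P , T ≫`. -/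
def insTree : List ℕ → Tree → Tree → Tree
  | [], S, _ => S
  | [k], S, T => .node (S.children.take k ++ T.children ++ S.children.drop (k + 1))
  | k :: P, S, T =>
      .node (S.children.take k ++
        [insTree P (S.children.getD k (.node [])) (T.children.headD (.node []))] ++
        S.children.drop (k + 1))

/-- The branch of `S ≪ P , T ≫` induced by a branch `Q` of `T`. -/
def insBranch : List ℕ → List ℕ → List ℕ
  | [], Q => Q
  | [k], q :: Q => (q + k) :: Q
  | [k], [] => [k]
  | k :: P, Q => k :: insBranch P (Q.drop 1)

/-- The boundary `∂ₙ` of a tree (truncation at depth `n`). -/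
def Tree.bdry : ℕ → Tree → Tree
  | 0, _ => .node []
  | _ + 1, .node [] => .node []
  | n + 1, .node (t :: ts) => .node (Tree.bdry n t :: (Tree.bdry (n + 1) (.node ts)).children)

/-! ### Syntax of Catt -/

mutual
inductive Ty : Type
  | star : Ty
  | arr : Tm → Ty → Tm → Ty
inductive Tm : Type
  | var : Path → Tm
  | coh : Tree → Ty → (Path → Tm) → Tm
end

/-- A substitution assigns a term to each variable (path). -/
abbrev Sub := Path → Tm

/-- Contexts: named contexts whose variable names are paths. -/
abbrev Ctx := List (Path × Ty)

def Ty.dim : Ty → ℕ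
  | .star => 0
  | .arr _ A _ => A.dim + 1

def Tm.dim : Tm → ℕ
  | .var p => p.length - 1
  | .coh _ A _ => A.dim

/-- Applying a substitution to a term. -/
def Tm.sub : Tm → Sub → Tm
  | .var p, σ => σ p
  | .coh T A τ, σ => .coh T A (fun p => (τ p).sub σ)

/-- Applying a substitution to a type. -/
def Ty.sub : Ty → Sub → Ty
  | .star, _ => .star
  | .arr s A t, σ => .arr (s.sub σ) (A.sub σ) (t.sub σ)

/-- Composition of substitutions, diagrammatic order: `(σ.comp τ) = σ` followed by `τ`. -/
def Sub.comp (σ τ : Sub) : Sub := fun p => (σ p).sub τ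

/-- The identity substitution. -/
def Sub.id : Sub := fun p => .var p

/-! ### Suspension -/

mutual
/-- Suspension of a term. -/
def Tm.susp : Tm → Tm
  | .var p => .var (0 :: p)
  | .coh T A σ => .coh T.susp A.susp (fun p => match p with
      | [j] => .var [j]
      | 0 :: q => (σ q).susp
      | _ => .var p)
/-- Suspension of a type. -/
def Ty.susp : Ty → Ty
  | .star => .arr (.var [0]) .star (.var [1])
  | .arr s A t => .arr s.susp A.susp t.susp
end

/-- Suspension of a substitution. -/
def suspSub (σ : Sub) : Sub := fun p => match p with
  | [j] => .var [j]
  | 0 :: q => (σ q).susp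
  | _ => .var p

/-- Suspension of a context. -/
def ctxSusp (Γ : Ctx) : Ctx :=
  ([0], .star) :: ([1], .star) :: Γ.map (fun e => (0 :: e.1, e.2.susp))

/-- The substitution renaming a suspended term into the `k`-th wedge component
of a tree: `N ↦ [k]`, `S ↦ [k+1]`, `0 :: q ↦ k :: q`. -/
def compSub (k : ℕ) : Sub := fun p => match p with
  | [j] => .var [j + k]
  | 0 :: q => .var (k :: q)
  | _ => .var p

/-- The substitution including a tree as `m` consecutive wedge components
starting at offset `k`. -/
def wedgeShift (k : ℕ) : Sub := fun p => match p with
  | j :: q => .var ((j + k) :: q)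
  | [] => .var []

/-- The type of the variable at path `p` in the pasting context of a tree. -/
def pathType : Path → Tree → Ty
  | [], _ => .star
  | [_], _ => .star
  | k :: p, S => ((pathType p (S.children.getD k (.node []))).susp).sub (compSub k)

/-- All variable paths of a tree, with an offset for the 0-dimensional endpoints. -/
def treePathsAux : Tree → ℕ → List Path
  | .node [], k => [[k]]
  | .node (t :: ts), k =>
      [k] :: (treePathsAux t 0).map (k :: ·) ++ treePathsAux (.node ts) (k + 1)

/-- All variable paths of a tree. -/
def treePaths (T : Tree) : List Path := treePathsAux T 0

/-- The pasting context `⌊T⌋` generated by a tree. -/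
def treeCtx (T : Tree) : Ctx := (treePaths T).map (fun p => (p, pathType p T))

/-! ### Disc substitutions and unbiased constructions -/

/-- The list of source/target pairs of a type, lowest dimension first. -/
def Ty.srcs : Ty → List (Tm × Tm)
  | .star => []
  | .arr s A t => A.srcs ++ [(s, t)]

/-- The substitution `{A, u} : D^{dim A} → Γ` from a disc determined by a type
and a term. -/
def discSub (A : Ty) (u : Tm) : Sub := fun p =>
  let L := A.srcs
  let k := p.length - 1
  if k < L.length then
    (if p.getLastD 0 = 0 then (L.getD k (u, u)).1 else (L.getD k (u, u)).2)
  else u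

/-- The boundary inclusion `δₙᵉ : ∂ₙ T → T` (`ε = false` is the source). -/
def incl (ε : Bool) : ℕ → Tree → Sub
  | 0, T => fun _ => if ε then .var [T.children.length] else .var [0]
  | n + 1, T => fun p => match p with
      | [] => .var []
      | [j] => .var [j]
      | i :: q => ((incl ε n (T.children.getD i (.node []))) q).susp.sub (compSub i)

open Classical in
mutual
/-- The unbiased type `𝒰_T^n`. -/
noncomputable def unbiasedType : Tree → ℕ → Ty
  | _, 0 => .star
  | T, n + 1 =>
      .arr ((unbiasedTm (Tree.bdry n T) n).sub (incl false n T))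
           (unbiasedType T n)
           ((unbiasedTm (Tree.bdry n T) n).sub (incl true n T))
termination_by T n => 2 * n
/-- The unbiased term `𝒯_T^n`. -/
noncomputable def unbiasedTm : Tree → ℕ → Tm
  | T, n =>
      if T = discTree n then .var T.maxPath
      else .coh T (unbiasedType T n) (fun p => .var p)
termination_by T n => 2 * n + 1
end

/-- The unbiased coherence `𝒞_T^n`. -/
noncomputable def unbiasedCoh (T : Tree) (n : ℕ) : Tm :=
  .coh T (unbiasedType T n) (fun p => .var p)

/-- The identity coherence `𝟙` on a term `u` of type `A`. -/
noncomputable def idCoh (A : Ty) (u : Tm) : Tm :=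
  (unbiasedCoh (discTree A.dim) (A.dim + 1)).sub (discSub A u)

/-! ### Insertion -/

/-- The interior substitution `ι : T → S ≪ P , T ≫`. -/
def iota : List ℕ → Tree → Tree → Sub
  | [], _, _ => fun p => .var p
  | [k], _, _ => wedgeShift k
  | k :: P, S, T => fun p =>
      ((suspSub (iota P (S.children.getD k (.node [])) (T.children.headD (.node [])))) p).sub
        (compSub k)

/-- The exterior substitution `κ : S → S ≪ P , T ≫`. -/
noncomputable def kappa : List ℕ → Tree → Tree → Sub
  | [], _, _ => fun p => .var p
  | [k], S, T =>
      let m := T.children.length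
      let n := (S.children.getD k (.node [])).dim + 1
      fun p => match p with
        | [] => .var []
        | [j] => if j ≤ k then .var [j] else .var [j + m - 1]
        | i :: q =>
          if i < k then .var (i :: q)
          else if i = k then
            ((discSub (unbiasedType T n) (unbiasedCoh T n)) (0 :: q)).sub (wedgeShift k)
          else .var ((i + m - 1) :: q)
  | k :: P, S, T => fun p => match p with
      | [] => .var []
      | [j] => .var [j]
      | i :: q =>
        if i = k then
          ((suspSub (kappa P (S.children.getD k (.node [])) (T.children.headD (.node []))))
            (0 :: q)).sub (compSub k)
        else .var (i :: q)

/-- The inserted substitution `σ ≪ P , τ ≫ : S ≪ P , T ≫ → Γ`. -/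
def insSub : List ℕ → Tree → Tree → Sub → Sub → Sub
  | [], _, _, σ, _ => σ
  | [k], _, T, σ, τ =>
      let m := T.children.length
      fun p => match p with
        | [] => σ []
        | [j] => if j < k then σ [j] else if j ≤ k + m then τ [j - k] else σ [j - m + 1]
        | i :: q =>
          if i < k then σ (i :: q)
          else if i < k + m then τ ((i - k) :: q)
          else σ ((i - m + 1) :: q)
  | k :: P, S, T, σ, τ => fun p => match p with
      | [] => σ []
      | [j] => if j = k then τ [0] else if j = k + 1 then τ [1] else σ [j]
      | i :: q =>
        if i = k then
          insSub P (S.children.getD k (.node [])) (T.children.headD (.node []))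
            (fun r => σ (k :: r)) (fun r => τ (0 :: r)) q
        else σ (i :: q)

/-! ### Syntactic equality (α-equality; substitutions are compared on all
valid variable paths of the relevant tree) -/

mutual
inductive TmEqv : Tm → Tm → Prop
  | var (p : Path) : TmEqv (.var p) (.var p)
  | coh (T : Tree) (A B : Ty) (σ τ : Sub) : TyEqv A B →
      (∀ p, IsPath T p → TmEqv (σ p) (τ p)) → TmEqv (.coh T A σ) (.coh T B τ)
inductive TyEqv : Ty → Ty → Prop
  | star : TyEqv .star .star
  | arr {s s' t t' : Tm} {A A' : Ty} : TmEqv s s' → TyEqv A A' → TmEqv t t' →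
      TyEqv (.arr s A t) (.arr s' A' t')
end

/-- Syntactic equality of substitutions out of (the context of) a tree. -/
def SubEqv (dom : Tree) (σ τ : Sub) : Prop := ∀ p, IsPath dom p → TmEqv (σ p) (τ p)

/-- Syntactic equality of substitutions on all locally maximal variables
(`σ ≡ᵐᵃˣ τ`). -/
def MaxEqv (dom : Tree) (σ τ : Sub) : Prop := ∀ p, IsMaxPath dom p → TmEqv (σ p) (τ p)

/-! ### Insertion points and redexes -/

/-- An insertion point `(S, P, T)`. -/
def InsPoint (S : Tree) (P : List ℕ) (T : Tree) : Prop :=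
  IsBranch S P ∧ bh P ≤ T.th

/-- An insertion redex `(S, P, T, Γ, σ, τ)` (the codomain context is implicit in
the raw substitutions): `⌊P⌋[σ] ≡ 𝒞_T^{lh(P)}[τ]`. -/
def InsRedex (S : Tree) (P : List ℕ) (T : Tree) (σ τ : Sub) : Prop :=
  InsPoint S P T ∧ TmEqv (σ (branchVar P S)) ((unbiasedCoh T (lh P S)).sub τ)

/-! ### Identities, rewrite rules, reduction -/

/-- Identity terms: terms of the form `𝟙[σ]`. -/
def isIdentity (t : Tm) : Prop :=
  ∃ n σ, t = .coh (discTree n) (unbiasedType (discTree n) (n + 1)) σ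

/-- The three generating rewrite rules of Catt_sua: disc removal,
endo-coherence removal, and insertion. -/
inductive SuaRule : Tm → Tm → Prop
  | disc (n : ℕ) (σ : Sub) :
      SuaRule (.coh (discTree n) (unbiasedType (discTree n) n) σ) (σ (discTree n).maxPath)
  | ecr (T : Tree) (s : Tm) (A : Ty) (σ : Sub) :
      ¬ isIdentity (.coh T (.arr s A s) σ) →
      SuaRule (.coh T (.arr s A s) σ) (idCoh (A.sub σ) (s.sub σ))
  | ins (S T : Tree) (P : List ℕ) (A : Ty) (σ τ : Sub) :
      InsRedex S P T σ τ →
      (lh P S = T.dim ∨ T = discTree (lh P S - 1)) →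
      ¬ isIdentity (.coh S A σ) →
      SuaRule (.coh S A σ)
        (.coh (insTree P S T) (A.sub (kappa P S T)) (insSub P S T σ τ))

mutual
/-- One-step reduction, flagged by whether the derivation uses the cell rule. -/
inductive Red : Bool → Tm → Tm → Prop
  | rule {s t : Tm} : SuaRule s t → Red false s t
  | cell {b : Bool} {A B : Ty} (T : Tree) (σ : Sub) : RedTy b A B →
      Red true (.coh T A σ) (.coh T B σ)
  | arg {b : Bool} (T : Tree) (A : Ty) (σ τ : Sub) (p : Path) : IsPath T p →
      Red b (σ p) (τ p) → (∀ q, IsPath T q → q ≠ p → TmEqv (σ q) (τ q)) →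
      Red b (.coh T A σ) (.coh T A τ)
inductive RedTy : Bool → Ty → Ty → Prop
  | src {b : Bool} {s s' t : Tm} {A : Ty} : Red b s s' → RedTy b (.arr s A t) (.arr s' A t)
  | base {b : Bool} {s t : Tm} {A A' : Ty} : RedTy b A A' → RedTy b (.arr s A t) (.arr s A' t)
  | tgt {b : Bool} {s t t' : Tm} {A : Ty} : Red b t t' → RedTy b (.arr s A t) (.arr s A t')
end

/-- One-step reduction of terms. -/
def Red1 (s t : Tm) : Prop := ∃ b, Red b s t

/-- Multi-step reduction of terms. -/
def RedStar : Tm → Tm → Prop := Relation.ReflTransGen Red1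

/-- Multi-step reduction of types. -/
def RedTyStar : Ty → Ty → Prop := Relation.ReflTransGen (fun A B => ∃ b, RedTy b A B)

/-- One-step reduction of substitutions out of a tree, flagged. -/
def RedSubF (b : Bool) (dom : Tree) (σ τ : Sub) : Prop :=
  ∃ p, IsPath dom p ∧ Red b (σ p) (τ p) ∧ ∀ q, IsPath dom q → q ≠ p → TmEqv (σ q) (τ q)

/-! ### Free variables and support -/

mutual
inductive FvTm : Tm → Path → Prop
  | var (p : Path) : FvTm (.var p) p
  | coh {T : Tree} {A : Ty} {σ : Sub} {p q : Path} : IsPath T p → FvTm (σ p) q →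
      FvTm (.coh T A σ) q
inductive FvTy : Ty → Path → Prop
  | src {s t : Tm} {A : Ty} {q : Path} : FvTm s q → FvTy (.arr s A t) q
  | base {s t : Tm} {A : Ty} {q : Path} : FvTy A q → FvTy (.arr s A t) q
  | tgt {s t : Tm} {A : Ty} {q : Path} : FvTm t q → FvTy (.arr s A t) q
end

/-- Downward closure of a set of variables in a context. -/
inductive Closure (Γ : Ctx) (P : Path → Prop) : Path → Prop
  | base {p : Path} : P p → Closure Γ P p
  | step {p q : Path} {A : Ty} : Closure Γ P p → (p, A) ∈ Γ → FvTy A q → Closure Γ P q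

/-- Support of a term. -/
def Tm.supp (Γ : Ctx) (t : Tm) : Set Path := {q | Closure Γ (FvTm t) q}

/-- Support of a substitution out of a tree. -/
def subSupp (Γ : Ctx) (dom : Tree) (σ : Sub) : Set Path :=
  {q | Closure Γ (fun r => ∃ p, IsPath dom p ∧ FvTm (σ p) r) q}

/-! ### Typing and definitional equality, parameterized by a rule set -/

mutual
inductive CtxTy (R : Ctx → Tm → Tm → Prop) : Ctx → Prop
  | nil : CtxTy R []
  | cons {Γ : Ctx} {p : Path} {A : Ty} : CtxTy R Γ → TyTy R Γ A →
      CtxTy R ((p, A) :: Γ)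
inductive TyTy (R : Ctx → Tm → Tm → Prop) : Ctx → Ty → Prop
  | star {Γ : Ctx} : TyTy R Γ .star
  | arr {Γ : Ctx} {s t : Tm} {A : Ty} : TyTy R Γ A → TmTy R Γ s A → TmTy R Γ t A →
      TyTy R Γ (.arr s A t)
inductive TmTy (R : Ctx → Tm → Tm → Prop) : Ctx → Tm → Ty → Prop
  | var {Γ : Ctx} {p : Path} {A : Ty} : CtxTy R Γ → (p, A) ∈ Γ → TmTy R Γ (.var p) A
  | coh {Γ : Ctx} (S : Tree) (s t : Tm) (A : Ty) (σ : Sub) :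
      TyTy R (treeCtx S) (.arr s A t) →
      (∀ p B, (p, B) ∈ treeCtx S → TmTy R Γ (σ p) (B.sub σ)) →
      Tm.supp (treeCtx S) s =
        subSupp (treeCtx S) (Tree.bdry (S.dim - 1) S) (incl false (S.dim - 1) S) →
      Tm.supp (treeCtx S) t =
        subSupp (treeCtx S) (Tree.bdry (S.dim - 1) S) (incl true (S.dim - 1) S) →
      TmTy R Γ (.coh S (.arr s A t) σ) ((Ty.arr s A t).sub σ)
  | cohFull {Γ : Ctx} (S : Tree) (s t : Tm) (A : Ty) (σ : Sub) :
      TyTy R (treeCtx S) (.arr s A t) →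
      (∀ p B, (p, B) ∈ treeCtx S → TmTy R Γ (σ p) (B.sub σ)) →
      Tm.supp (treeCtx S) s = {q | IsPath S q} →
      Tm.supp (treeCtx S) t = {q | IsPath S q} →
      TmTy R Γ (.coh S (.arr s A t) σ) ((Ty.arr s A t).sub σ)
  | conv {Γ : Ctx} {u : Tm} {A B : Ty} : TmTy R Γ u A → TyEq R Γ A B → TmTy R Γ u B
inductive TmEq (R : Ctx → Tm → Tm → Prop) : Ctx → Tm → Tm → Prop
  | var {Γ : Ctx} (p : Path) : TmEq R Γ (.var p) (.var p)
  | symm {Γ : Ctx} {s t : Tm} : TmEq R Γ s t → TmEq R Γ t s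
  | trans {Γ : Ctx} {s t u : Tm} : TmEq R Γ s t → TmEq R Γ t u → TmEq R Γ s u
  | coh {Γ : Ctx} (S : Tree) (A B : Ty) (σ τ : Sub) : TyEq R (treeCtx S) A B →
      (∀ p C, (p, C) ∈ treeCtx S → TmEq R Γ (σ p) (τ p)) →
      TmEq R Γ (.coh S A σ) (.coh S B τ)
  | rule {Γ : Ctx} {s t : Tm} (A : Ty) : R Γ s t → TmTy R Γ s A → TmEq R Γ s t
inductive TyEq (R : Ctx → Tm → Tm → Prop) : Ctx → Ty → Ty → Prop
  | star {Γ : Ctx} : TyEq R Γ .star .star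
  | arr {Γ : Ctx} {s s' t t' : Tm} {A A' : Ty} : TmEq R Γ s s' → TyEq R Γ A A' →
      TmEq R Γ t t' → TyEq R Γ (.arr s A t) (.arr s' A' t')
end

/-- Well-typedness of a substitution: `Γ ⊢ σ : Δ`. -/
def SubTyped (R : Ctx → Tm → Tm → Prop) (Γ : Ctx) (σ : Sub) (Δ : Ctx) : Prop :=
  ∀ p A, (p, A) ∈ Δ → TmTy R Γ (σ p) (A.sub σ)

/-- Definitional equality of substitutions with domain `Δ`: `Γ ⊢ σ = τ`. -/
def SubDefEq (R : Ctx → Tm → Tm → Prop) (Γ Δ : Ctx) (σ τ : Sub) : Prop :=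
  ∀ p A, (p, A) ∈ Δ → TmEq R Γ (σ p) (τ p)

/-- Definitional equality of substitutions out of a tree on all locally maximal
variables (`σ =ᵐᵃˣ τ`). -/
def MaxDefEq (R : Ctx → Tm → Tm → Prop) (Γ : Ctx) (dom : Tree) (σ τ : Sub) : Prop :=
  ∀ p, IsMaxPath dom p → TmEq R Γ (σ p) (τ p)

/-! ### Conditions on rule sets -/

/-- The lifting condition. -/
def LiftCond (R : Ctx → Tm → Tm → Prop) : Prop :=
  ∀ Γ s t q A, R Γ s t → (∃ B, TmTy R ((q, A) :: Γ) s B) → TmEq R ((q, A) :: Γ) s t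

/-- The substitution condition. -/
def SubCond (R : Ctx → Tm → Tm → Prop) : Prop :=
  ∀ Γ s t Δ (σ : Sub), R Γ s t → (∀ p A, (p, A) ∈ Γ → TmTy R Δ (σ p) (A.sub σ)) →
    (∃ C, TmTy R Δ (s.sub σ) C) → TmEq R Δ (s.sub σ) (t.sub σ)

/-- The suspension condition. -/
def SuspCond (R : Ctx → Tm → Tm → Prop) : Prop :=
  ∀ Γ s t, R Γ s t → (∃ A, TmTy R (ctxSusp Γ) s.susp A) →
    TmEq R (ctxSusp Γ) s.susp t.susp

/-- A rule set is tame if it satisfies the lifting, substitution and suspension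
conditions. -/
def Tame (R : Ctx → Tm → Tm → Prop) : Prop := LiftCond R ∧ SubCond R ∧ SuspCond R

/-- The rule set generating Catt_sua. -/
def suaR : Ctx → Tm → Tm → Prop := fun _ s t => SuaRule s t

/-- The `n`-bounded restriction of the sua rule set, generating `n`-bounded
definitional equality `=ₙ`. -/
def suaBnd (n : ℕ) : Ctx → Tm → Tm → Prop := fun Γ s t => suaR Γ s t ∧ s.dim < n

/-! ### Syntactic complexity -/

open Classical in
/-- Syntactic complexity of a term: an ordinal below `ω ^ ω`. -/
noncomputable def Tm.sc : Tm → Ordinal :=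
  Tm.rec (motive_1 := fun _ => Ordinal) (motive_2 := fun _ => Ordinal)
    0 (fun _ _ _ _ _ _ => 0)
    (fun _ => 0)
    (fun T A σ _ ih =>
      (if isIdentity (.coh T A σ) then Ordinal.omega0 ^ (A.dim : Ordinal)
       else Ordinal.omega0 ^ (A.dim : Ordinal) ♯ Ordinal.omega0 ^ (A.dim : Ordinal)) ♯
        ((treePaths T).map ih).foldr (· ♯ ·) 0)

/-- Syntactic complexity of a substitution out of a tree. -/
noncomputable def scSub (dom : Tree) (σ : Sub) : Ordinal :=
  ((treePaths dom).map (fun p => (σ p).sc)).foldr (· ♯ ·) 0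


open Ordinal

instance : Std.Associative (α := Ordinal.{u}) (· ♯ ·) := ⟨nadd_assoc⟩
instance : Std.Commutative (α := Ordinal.{u}) (· ♯ ·) := ⟨nadd_comm⟩

/-- fold of syntactic complexities over a list of paths -/
noncomputable def F (l : List Path) (σ : Sub) : Ordinal.{u} :=
  (l.map (fun p => (σ p).sc)).foldr (· ♯ ·) 0

lemma scSub_eq_F (T : Tree) (σ : Sub) : scSub.{u} T σ = F.{u} (treePaths T) σ := rfl

lemma foldr_nadd (l : List Ordinal.{u}) (c : Ordinal.{u}) :
    l.foldr (· ♯ ·) c = l.foldr (· ♯ ·) 0 ♯ c := by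
  induction l with
  | nil => simp
  | cons a l ih => simp [List.foldr_cons, ih, nadd_assoc]

lemma F_nil (σ : Sub) : F.{u} [] σ = 0 := rfl
lemma F_cons (p : Path) (l : List Path) (σ : Sub) : F.{u} (p :: l) σ = (σ p).sc ♯ F l σ := rfl
lemma F_append (l1 l2 : List Path) (σ : Sub) : F.{u} (l1 ++ l2) σ = F l1 σ ♯ F l2 σ := by
  unfold F; rw [List.map_append, List.foldr_append, foldr_nadd]
lemma F_single (p : Path) (σ : Sub) : F.{u} [p] σ = (σ p).sc := by
  rw [F_cons, F_nil, nadd_zero]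
lemma F_map (l : List Path) (f : Path → Path) (σ : Sub) :
    F.{u} (l.map f) σ = F l (fun p => σ (f p)) := by
  simp [F, List.map_map]; rfl
lemma F_congr {l : List Path} {σ τ : Sub} (h : ∀ p ∈ l, ((σ p).sc : Ordinal.{u}) = (τ p).sc) :
    F.{u} l σ = F l τ := by
  induction l with
  | nil => rfl
  | cons a l ih =>
    rw [F_cons, F_cons, h a (List.mem_cons_self), ih (fun p hp => h p (List.mem_cons_of_mem a hp))]
lemma F_mem_le {p : Path} {l : List Path} (h : p ∈ l) (σ : Sub) : ((σ p).sc : Ordinal.{u}) ≤ F l σ := by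
  induction l with
  | nil => cases h
  | cons a l ih =>
    rcases List.mem_cons.1 h with rfl | h
    · rw [F_cons]; exact le_self_nadd
    · rw [F_cons]; exact (ih h).trans le_nadd_self

example (a b c : Ordinal) : a ♯ b ♯ c = c ♯ (b ♯ a) := by ac_rfl
lemma aux_nil (k : ℕ) : treePathsAux (.node []) k = [[k]] := by rw [treePathsAux]

lemma aux_cons (t : Tree) (ts : List Tree) (k : ℕ) :
    treePathsAux (.node (t :: ts)) k
      = ([k] :: (treePaths t).map (k :: ·)) ++ treePathsAux (.node ts) (k + 1) := by
  rw [treePathsAux]; rfl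

/-- Paths of a list of trees excluding the final endpoint. -/
def K : List Tree → ℕ → List Path
  | [], _ => []
  | t :: ts, k => ([k] :: (treePaths t).map (k :: ·)) ++ K ts (k + 1)

lemma K1 (l : List Tree) (k : ℕ) :
    treePathsAux (.node l) k = K l k ++ [[k + l.length]] := by
  induction l generalizing k with
  | nil => simp [aux_nil, K]
  | cons t ts ih =>
    have h : k + 1 + ts.length = k + (t :: ts).length := by simp; omega
    rw [aux_cons, ih, ← List.append_assoc, h]; rfl

lemma K2 (l1 l2 : List Tree) (k : ℕ) :
    K (l1 ++ l2) k = K l1 k ++ K l2 (k + l1.length) := by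
  induction l1 generalizing k with
  | nil => simp [K]
  | cons t ts ih =>
    have h : k + 1 + ts.length = k + (t :: ts).length := by simp; omega
    show ([k] :: (treePaths t).map (k :: ·)) ++ K (ts ++ l2) (k+1) = _
    rw [ih, ← List.append_assoc, h]; rfl

def shiftP (k : ℕ) (p : Path) : Path := (p.headD 0 + k) :: p.tail

lemma shiftP_shiftP (a b : ℕ) (p : Path) : shiftP a (shiftP b p) = shiftP (b + a) p := by
  simp [shiftP]; omega

lemma shiftP_cons (k j : ℕ) (q : Path) : shiftP k (j :: q) = (j + k) :: q := rfl

lemma K3 (l : List Tree) (k : ℕ) : K l k = (K l 0).map (shiftP k) := by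
  induction l generalizing k with
  | nil => rfl
  | cons t ts ih =>
    show ([k] :: (treePaths t).map (k :: ·)) ++ K ts (k+1)
      = (([0] :: (treePaths t).map (0 :: ·)) ++ K ts 1).map (shiftP k)
    rw [List.map_append, List.map_cons, List.map_map, ih (k+1), ih 1, List.map_map]
    have h1 : shiftP k ∘ (0 :: ·) = ((k : ℕ) :: ·) := by
      funext q; simp [shiftP]
    have h2 : shiftP k ∘ shiftP 1 = shiftP (k+1) := by
      funext q; rw [Function.comp_apply, shiftP_shiftP]; congr 1; omega
    rw [h1, h2]
    simp [shiftP]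

lemma SHIFT (l : List Tree) (k : ℕ) :
    treePathsAux (.node l) k = (treePathsAux (.node l) 0).map (shiftP k) := by
  rw [K1, K1, List.map_append, ← K3]
  congr 2
  simp [shiftP]; omega

lemma MEM (l : List Tree) (k : ℕ) (p : Path) (h : p ∈ treePathsAux (.node l) k) :
    (∃ j, j ≤ l.length ∧ p = [k + j]) ∨
    (∃ j q, j < l.length ∧ q ∈ treePaths (l.getD j (.node [])) ∧ p = (k + j) :: q) := by
  induction l generalizing k with
  | nil =>
    rw [aux_nil] at h
    simp at h
    exact .inl ⟨0, by omega, by simpa using h⟩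
  | cons t ts ih =>
    rw [aux_cons] at h
    rcases List.mem_append.1 h with h | h
    · rcases List.mem_cons.1 h with rfl | h
      · exact .inl ⟨0, by simp, by simp⟩
      · obtain ⟨q, hq, rfl⟩ := List.mem_map.1 h
        exact .inr ⟨0, q, by simp, by simpa using hq, by simp⟩
    · rcases ih (k+1) h with ⟨j, hj, rfl⟩ | ⟨j, q, hj, hq, rfl⟩
      · exact .inl ⟨j+1, by simp; omega, by congr 1; omega⟩
      · refine .inr ⟨j+1, q, by simp; omega, by simpa using hq, by congr 1; omega⟩

lemma tp_ne_nil {T : Tree} {p : Path} (h : p ∈ treePaths T) : p ≠ [] := by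
  obtain ⟨l⟩ := T
  rcases MEM l 0 p h with ⟨j, _, rfl⟩ | ⟨j, q, _, _, rfl⟩ <;> simp

lemma MEMK (l : List Tree) (k : ℕ) (p : Path) (h : p ∈ K l k) :
    (∃ j, j < l.length ∧ p = [k + j]) ∨
    (∃ j q, j < l.length ∧ q ∈ treePaths (l.getD j (.node [])) ∧ p = (k + j) :: q) := by
  induction l generalizing k with
  | nil => cases h
  | cons t ts ih =>
    rcases List.mem_append.1 h with h | h
    · rcases List.mem_cons.1 h with rfl | h
      · exact .inl ⟨0, by simp, by simp⟩
      · obtain ⟨q, hq, rfl⟩ := List.mem_map.1 h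
        exact .inr ⟨0, q, by simp, by simpa using hq, by simp⟩
    · rcases ih (k+1) h with ⟨j, hj, rfl⟩ | ⟨j, q, hj, hq, rfl⟩
      · exact .inl ⟨j+1, by simp; omega, by congr 1; omega⟩
      · refine .inr ⟨j+1, q, by simp; omega, by simpa using hq, by congr 1; omega⟩

lemma AUXHEAD (l : List Tree) (k : ℕ) :
    treePathsAux (.node l) k = [k] :: (treePathsAux (.node l) k).tail := by
  cases l with
  | nil => rw [aux_nil]; rfl
  | cons t ts => rw [aux_cons]; rfl

lemma TAILMEM (l : List Tree) (p : Path) (h : p ∈ (treePathsAux (.node l) 0).tail) :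
    (∃ j, 1 ≤ j ∧ p = [j]) ∨ (∃ i q, q ≠ [] ∧ p = i :: q) := by
  cases l with
  | nil => rw [aux_nil] at h; cases h
  | cons t ts =>
    rw [aux_cons] at h
    rcases List.mem_append.1 h with h | h
    · obtain ⟨q, hq, rfl⟩ := List.mem_map.1 h
      exact .inr ⟨0, q, tp_ne_nil hq, rfl⟩
    · rcases MEM ts 1 p h with ⟨j, _, rfl⟩ | ⟨j, q, _, hq, rfl⟩
      · exact .inl ⟨1 + j, by omega, rfl⟩
      · exact .inr ⟨1 + j, q, tp_ne_nil hq, rfl⟩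
theorem Tree.ind (P : Tree → Prop) (h : ∀ l, (∀ t ∈ l, P t) → P (.node l)) : ∀ T, P T := by
  intro T
  refine Tree.rec (motive_1 := P) (motive_2 := fun l => ∀ t ∈ l, P t) (fun l ih => h l ih) ?_ ?_ T
  · intro t ht; cases ht
  · intro t l ht hl s hs
    rcases List.mem_cons.1 hs with rfl | hs
    · exact ht
    · exact hl s hs

lemma maxPath_mem : ∀ T : Tree, T.maxPath ∈ treePaths T := by
  refine Tree.ind _ (fun l ih => ?_)
  cases l with
  | nil => rw [Tree.maxPath]; show _ ∈ treePathsAux _ 0; rw [aux_nil]; simp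
  | cons t ts =>
    rw [Tree.maxPath]
    show _ ∈ treePathsAux _ 0
    rw [aux_cons]
    exact List.mem_append.2 (.inl (List.mem_cons.2 (.inr
      (List.mem_map.2 ⟨t.maxPath, ih t (by simp), rfl⟩))))

lemma isPath_of_mem : ∀ (n : ℕ) (p : Path), p.length ≤ n → ∀ T, p ∈ treePaths T → IsPath T p := by
  intro n
  induction n with
  | zero => intro p hp T h; interval_cases hl : p.length; · exact absurd (List.length_eq_zero_iff.1 hl) (tp_ne_nil h)
  | succ n ih =>
    intro p hp T h
    obtain ⟨l⟩ := T
    rcases MEM l 0 p h with ⟨j, hj, rfl⟩ | ⟨j, q, hj, hq, rfl⟩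
    · simpa using IsPath.point l j hj
    · have : q.length ≤ n := by simp at hp; omega
      simpa using IsPath.deeper l j q hj (ih q this _ hq)

lemma isPath_of_mem' {T : Tree} {p : Path} (h : p ∈ treePaths T) : IsPath T p :=
  isPath_of_mem p.length p le_rfl T h

noncomputable def GK (l : List Tree) (k : ℕ) (σ : Sub) : Ordinal.{u} := F (K l k) σ

lemma GK_nil (k : ℕ) (σ : Sub) : GK.{u} [] k σ = 0 := rfl

lemma GK_cons (t : Tree) (ts : List Tree) (k : ℕ) (σ : Sub) :
    GK.{u} (t :: ts) k σ = ((σ [k]).sc ♯ scSub t (fun p => σ (k :: p))) ♯ GK ts (k+1) σ := by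
  show F (([k] :: (treePaths t).map (k :: ·)) ++ K ts (k + 1)) σ = _
  rw [F_append, F_cons, F_map, scSub_eq_F]; rfl

lemma GK_append (l1 l2 : List Tree) (k : ℕ) (σ : Sub) :
    GK.{u} (l1 ++ l2) k σ = GK l1 k σ ♯ GK l2 (k + l1.length) σ := by
  unfold GK; rw [K2, F_append]

lemma scSub_node (l : List Tree) (σ : Sub) :
    scSub.{u} (.node l) σ = GK l 0 σ ♯ (σ [l.length]).sc := by
  rw [scSub_eq_F]
  show F (treePathsAux (.node l) 0) σ = _
  rw [K1, F_append, F_single]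
  simp only [Nat.zero_add]
  rfl
open Classical in
lemma sc_coh (T : Tree) (A : Ty) (σ : Sub) : (Tm.coh T A σ).sc =
    (if isIdentity (.coh T A σ) then Ordinal.omega0 ^ (A.dim : Ordinal.{u})
     else Ordinal.omega0 ^ (A.dim : Ordinal) ♯ Ordinal.omega0 ^ (A.dim : Ordinal)) ♯
      F (treePaths T) σ := rfl

lemma tyEqv_dim {A B : Ty} (h : TyEqv A B) : A.dim = B.dim := by
  refine TyEqv.rec (motive_1 := fun _ _ _ => True) (motive_2 := fun A B _ => A.dim = B.dim)
    (fun _ => trivial) (fun _ _ _ _ _ _ _ _ _ => trivial) rfl ?_ h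
  intro s s' t t' A A' _ _ _ _ ih _
  simp [Ty.dim, ih]

inductive VarTy : Ty → Prop
  | star : VarTy .star
  | arr (p q : Path) {A : Ty} : VarTy A → VarTy (.arr (.var p) A (.var q))

lemma varTy_left : ∀ {A B : Ty}, VarTy A → TyEqv A B → A = B := by
  intro A B hA h
  induction hA generalizing B with
  | star => cases h; rfl
  | arr p q hA ih =>
    cases h with
    | arr hs hAB ht =>
      cases hs; cases ht; rw [ih hAB]

lemma varTy_right : ∀ {A B : Ty}, VarTy B → TyEqv A B → A = B := by
  intro A B hB h
  induction hB generalizing A with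
  | star => cases h; rfl
  | arr p q hB ih =>
    cases h with
    | arr hs hAB ht =>
      cases hs; cases ht; rw [ih hAB]

lemma compSub_var (i : ℕ) (p : Path) : ∃ q, compSub i p = .var q := by
  rcases p with _ | ⟨a, _ | ⟨b, q⟩⟩
  · exact ⟨[], rfl⟩
  · rcases a with _ | a
    · exact ⟨[0 + i], rfl⟩
    · exact ⟨[(a+1) + i], rfl⟩
  · rcases a with _ | a
    · exact ⟨i :: b :: q, rfl⟩
    · exact ⟨(a+1) :: b :: q, rfl⟩

lemma susp_var (p : Path) : (Tm.var p).susp = .var (0 :: p) := by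
  rw [Tm.susp]

lemma incl_var : ∀ (n : ℕ) (ε : Bool) (T : Tree) (p : Path), ∃ q, incl ε n T p = .var q := by
  intro n
  induction n with
  | zero => intro ε T p; cases ε <;> exact ⟨_, rfl⟩
  | succ n ih =>
    intro ε T p
    rcases p with _ | ⟨i, q⟩
    · exact ⟨[], rfl⟩
    · rcases q with _ | ⟨b, q⟩
      · exact ⟨[i], rfl⟩
      · obtain ⟨r, hr⟩ := ih ε (T.children.getD i (.node [])) (b :: q)
        show ∃ q', ((incl ε n (T.children.getD i (.node [])) (b :: q)).susp).sub (compSub i) = .var q'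
        rw [hr, susp_var]
        show ∃ q', compSub i (0 :: r) = .var q'
        exact compSub_var i (0 :: r)

lemma bdry_disc : ∀ (m n : ℕ), m ≤ n → Tree.bdry m (discTree n) = discTree m := by
  intro m
  induction m with
  | zero => intro n _; rw [Tree.bdry]; rfl
  | succ m ih =>
    intro n hn
    rcases n with _ | n
    · omega
    · show Tree.bdry (m+1) (.node [discTree n]) = _
      have hb : Tree.bdry (m+1) (.node []) = .node [] := by rw [Tree.bdry]
      rw [Tree.bdry, ih n (by omega), hb]
      rfl
lemma unbTm_disc (n : ℕ) : unbiasedTm (discTree n) n = .var (discTree n).maxPath := by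
  rw [unbiasedTm, if_pos rfl]

lemma varTy_unb : ∀ (m n : ℕ), m ≤ n + 1 → VarTy (unbiasedType (discTree n) m) := by
  intro m
  induction m with
  | zero => intro n _; rw [unbiasedType]; exact .star
  | succ m ih =>
    intro n hm
    rw [unbiasedType, bdry_disc m n (by omega), unbTm_disc]
    obtain ⟨q1, h1⟩ := incl_var m false (discTree n) (discTree m).maxPath
    obtain ⟨q2, h2⟩ := incl_var m true (discTree n) (discTree m).maxPath
    show VarTy (.arr (incl false m (discTree n) (discTree m).maxPath) _
      (incl true m (discTree n) (discTree m).maxPath))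
    rw [h1, h2]
    exact .arr q1 q2 (ih n (by omega))

lemma isIdentity_iff (T : Tree) (A : Ty) (σ : Sub) :
    isIdentity (.coh T A σ) ↔ ∃ n, T = discTree n ∧ A = unbiasedType (discTree n) (n + 1) := by
  constructor
  · rintro ⟨n, σ', h⟩
    injection h with h1 h2 h3
    exact ⟨n, h1, h2⟩
  · rintro ⟨n, rfl, rfl⟩
    exact ⟨n, σ, rfl⟩

lemma isIdentity_congr {T : Tree} {A B : Ty} {σ τ : Sub} (hAB : TyEqv A B) :
    isIdentity (.coh T A σ) ↔ isIdentity (.coh T B τ) := by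
  rw [isIdentity_iff, isIdentity_iff]
  constructor
  · rintro ⟨n, rfl, rfl⟩
    exact ⟨n, rfl, (varTy_left (varTy_unb (n+1) n le_rfl) hAB).symm⟩
  · rintro ⟨n, rfl, rfl⟩
    exact ⟨n, rfl, varTy_right (varTy_unb (n+1) n le_rfl) hAB⟩

open Classical in
lemma sc_eqv : ∀ {u v : Tm}, TmEqv u v → u.sc = v.sc := by
  intro u v h
  refine TmEqv.rec (motive_1 := fun u v _ => u.sc = v.sc) (motive_2 := fun _ _ _ => True)
    (fun _ => rfl) ?_ trivial (fun _ _ _ _ _ _ => trivial) h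
  intro T A B σ τ hAB hστ _ ih
  rw [sc_coh, sc_coh, tyEqv_dim hAB, F_congr (fun p hp => ih p (isPath_of_mem' hp))]
  congr 1
  exact if_congr (isIdentity_congr hAB) rfl rfl
/-- tail-part complexity of a list of trees -/
noncomputable def Rst (l : List Tree) (σ : Sub) : Ordinal.{u} :=
  F ((treePathsAux (.node l) 0).tail) σ

lemma tailF (l2 : List Tree) (j : ℕ) (σ : Sub) :
    GK.{u} l2 j σ ♯ (σ [j + l2.length]).sc
      = (σ (shiftP j [0])).sc ♯ Rst l2 (fun p => σ (shiftP j p)) := by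
  unfold GK Rst
  rw [← F_single [j + l2.length] σ, ← F_append, ← K1, SHIFT, F_map]
  conv_lhs => rw [AUXHEAD l2 0]
  rw [F_cons]

lemma split3 (l1 : List Tree) (c : Tree) (l2 : List Tree) (σ : Sub) :
    scSub.{u} (.node (l1 ++ c :: l2)) σ =
      ((GK l1 0 σ ♯ (σ [l1.length]).sc) ♯
        (scSub c (fun p => σ (l1.length :: p)) ♯ (σ (shiftP (l1.length + 1) [0])).sc)) ♯
      Rst l2 (fun p => σ (shiftP (l1.length + 1) p)) := by
  rw [scSub_node, GK_append, GK_cons]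
  have h1 : (l1 ++ c :: l2).length = (l1.length + 1) + l2.length := by simp; omega
  rw [h1]
  have h2 : (0 : ℕ) + l1.length = l1.length := by omega
  rw [h2]
  calc (GK l1 0 σ ♯ (((σ [l1.length]).sc ♯ scSub c fun p => σ (l1.length :: p)) ♯
          GK l2 (l1.length + 1) σ)) ♯ (σ [l1.length + 1 + l2.length]).sc
      = (GK l1 0 σ ♯ ((σ [l1.length]).sc ♯ scSub c fun p => σ (l1.length :: p))) ♯
          (GK l2 (l1.length + 1) σ ♯ (σ [l1.length + 1 + l2.length]).sc) := by ac_rfl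
    _ = _ := by rw [tailF]; ac_rfl

lemma split3' (l1 B l2 : List Tree) (σ : Sub) :
    scSub.{u} (.node ((l1 ++ B) ++ l2)) σ =
      ((GK l1 0 σ ♯ GK B l1.length σ) ♯ (σ (shiftP (l1.length + B.length) [0])).sc) ♯
      Rst l2 (fun p => σ (shiftP (l1.length + B.length) p)) := by
  rw [scSub_node, GK_append, GK_append]
  have h1 : ((l1 ++ B) ++ l2).length = (l1.length + B.length) + l2.length := by simp; omega
  rw [h1]
  have h2 : (0 : ℕ) + l1.length = l1.length := by omega
  have h3 : (0 : ℕ) + (l1 ++ B).length = l1.length + B.length := by simp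
  rw [h2, h3]
  calc (GK l1 0 σ ♯ GK B l1.length σ) ♯ GK l2 (l1.length + B.length) σ ♯
          (σ [l1.length + B.length + l2.length]).sc
      = (GK l1 0 σ ♯ GK B l1.length σ) ♯
          (GK l2 (l1.length + B.length) σ ♯ (σ [l1.length + B.length + l2.length]).sc) := by ac_rfl
    _ = _ := by rw [tailF]; ac_rfl
lemma ts_decomp (ts : List Tree) (k : ℕ) (hk : k < ts.length) :
    ts = ts.take k ++ ts.getD k (.node []) :: ts.drop (k+1) := by
  conv_lhs => rw [← List.take_append_drop k ts, List.drop_eq_getElem_cons hk]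
  rw [List.getD_eq_getElem ts _ hk]

lemma GK_congr {l : List Tree} {k : ℕ} {σ τ : Sub}
    (h : ∀ p ∈ K l k, ((σ p).sc : Ordinal.{u}) = (τ p).sc) : GK.{u} l k σ = GK l k τ :=
  F_congr h

lemma Rst_congr {l : List Tree} {σ τ : Sub}
    (h : ∀ p ∈ (treePathsAux (.node l) 0).tail, ((σ p).sc : Ordinal.{u}) = (τ p).sc) :
    Rst.{u} l σ = Rst l τ :=
  F_congr h

lemma key_base' (A : List Tree) (c : Tree) (C B : List Tree) (k : ℕ) (hA : A.length = k)
    (σ τ : Sub) :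
    scSub.{u} (.node ((A ++ B) ++ C)) (insSub [k] (.node (A ++ c :: C)) (.node B) σ τ) ♯
      (σ (k :: c.maxPath)).sc
      ≤ scSub (.node (A ++ c :: C)) σ ♯ scSub (.node B) τ := by
  set ι := insSub [k] (.node (A ++ c :: C)) (.node B) σ τ with hι
  have e1 : GK.{u} A 0 ι = GK A 0 σ := by
    apply GK_congr
    intro p hp
    rcases MEMK A 0 p hp with ⟨j, hj, rfl⟩ | ⟨j, q, hj, hq, rfl⟩
    · rw [hA] at hj
      have : ι [0 + j] = σ [0 + j] := by
        rw [hι]; simp only [insSub]; rw [if_pos (by omega)]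
      rw [this]
    · rw [hA] at hj
      obtain ⟨a, q', rfl⟩ := List.exists_cons_of_ne_nil (tp_ne_nil hq)
      have : ι ((0 + j) :: a :: q') = σ ((0 + j) :: a :: q') := by
        rw [hι]; simp only [insSub]; rw [if_pos (by omega)]
      rw [this]
  have e2 : GK.{u} B k ι = GK B 0 τ := by
    unfold GK
    rw [K3 B k, F_map]
    apply F_congr
    intro p hp
    rcases MEMK B 0 p hp with ⟨j, hj, rfl⟩ | ⟨j, q, hj, hq, rfl⟩
    · have h1 : shiftP k [0 + j] = [(0 + j) + k] := rfl
      have h2 : ι [(0 + j) + k] = τ [0 + j] := by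
        rw [hι]; simp only [insSub]
        rw [if_neg (by omega),
          if_pos (show (0+j)+k ≤ k + (Tree.node B).children.length from by
            show (0+j)+k ≤ k + B.length; omega)]
        congr 1
        show [(0+j)+k - k] = [0 + j]
        congr 1; omega
      rw [h1, h2]
    · obtain ⟨a, q', rfl⟩ := List.exists_cons_of_ne_nil (tp_ne_nil hq)
      have h1 : shiftP k ((0 + j) :: a :: q') = ((0 + j) + k) :: a :: q' := rfl
      have h2 : ι (((0 + j) + k) :: a :: q') = τ ((0 + j) :: a :: q') := by
        rw [hι]; simp only [insSub]
        rw [if_neg (by omega),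
          if_pos (show (0+j)+k < k + (Tree.node B).children.length from by
            show (0+j)+k < k + B.length; omega)]
        congr 1
        show ((0+j)+k - k) :: a :: q' = (0 + j) :: a :: q'
        congr 1; omega
      rw [h1, h2]
  have e3 : ι (shiftP (k + B.length) [0]) = τ [B.length] := by
    rw [hι]
    show insSub [k] (.node (A ++ c :: C)) (.node B) σ τ [0 + (k + B.length)] = _
    simp only [insSub]
    rw [if_neg (by omega),
      if_pos (show 0 + (k + B.length) ≤ k + (Tree.node B).children.length from by
        show 0 + (k + B.length) ≤ k + B.length; omega)]
    congr 1
    show [0 + (k + B.length) - k] = [B.length]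
    congr 1; omega
  have e4 : Rst.{u} C (fun p => ι (shiftP (k + B.length) p))
      = Rst C (fun p => σ (shiftP (k + 1) p)) := by
    apply Rst_congr
    intro p hp
    rcases TAILMEM C p hp with ⟨j, hj, rfl⟩ | ⟨i, q, hq, rfl⟩
    · have h1 : shiftP (k + B.length) [j] = [j + (k + B.length)] := rfl
      have h2 : shiftP (k + 1) [j] = [j + (k + 1)] := rfl
      have h3 : ι [j + (k + B.length)] = σ [j + (k + 1)] := by
        rw [hι]; simp only [insSub]
        rw [if_neg (by omega),
          if_neg (show ¬ (j + (k + B.length)) ≤ k + (Tree.node B).children.length from by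
            show ¬ (j + (k + B.length)) ≤ k + B.length; omega)]
        congr 1
        show [j + (k + B.length) - (Tree.node B).children.length + 1] = [j + (k + 1)]
        congr 1
        show j + (k + B.length) - B.length + 1 = j + (k + 1)
        omega
      rw [h1, h2, h3]
    · obtain ⟨a, q', rfl⟩ := List.exists_cons_of_ne_nil hq
      have h1 : shiftP (k + B.length) (i :: a :: q') = (i + (k + B.length)) :: a :: q' := rfl
      have h2 : shiftP (k + 1) (i :: a :: q') = (i + (k + 1)) :: a :: q' := rfl
      have h3 : ι ((i + (k + B.length)) :: a :: q') = σ ((i + (k + 1)) :: a :: q') := by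
        rw [hι]; simp only [insSub]
        rw [if_neg (by omega),
          if_neg (show ¬ (i + (k + B.length)) < k + (Tree.node B).children.length from by
            show ¬ (i + (k + B.length)) < k + B.length; omega)]
        congr 1
        show (i + (k + B.length) - (Tree.node B).children.length + 1) :: a :: q'
          = (i + (k + 1)) :: a :: q'
        congr 1
        show i + (k + B.length) - B.length + 1 = i + (k + 1)
        omega
      rw [h1, h2, h3]
  rw [split3' A B C ι, split3 A c C σ, scSub_node B τ, hA, e1, e2, e3, e4]
  have hX : ((fun p => σ (k :: p)) c.maxPath).sc
      ≤ scSub.{u} c (fun p => σ (k :: p)) := by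
    rw [scSub_eq_F]; exact F_mem_le (maxPath_mem c) _
  calc ((GK A 0 σ ♯ GK B 0 τ) ♯ (τ [B.length]).sc) ♯
        Rst C (fun p => σ (shiftP (k + 1) p)) ♯ (σ (k :: c.maxPath)).sc
      = ((GK A 0 σ ♯ GK B 0 τ) ♯ ((τ [B.length]).sc ♯
          Rst C (fun p => σ (shiftP (k + 1) p)))) ♯ (σ (k :: c.maxPath)).sc := by ac_rfl
    _ ≤ ((GK A 0 σ ♯ GK B 0 τ) ♯ ((τ [B.length]).sc ♯
          Rst C (fun p => σ (shiftP (k + 1) p)))) ♯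
          ((σ [k]).sc ♯ (scSub c (fun p => σ (k :: p)) ♯ (σ (shiftP (k + 1) [0])).sc)) := by
        refine nadd_le_nadd_left ?_ _
        exact (hX.trans le_self_nadd).trans le_nadd_self
    _ = ((GK A 0 σ ♯ (σ [k]).sc) ♯
          ((scSub c fun p => σ (k :: p)) ♯ (σ (shiftP (k + 1) [0])).sc)) ♯
          (Rst C fun p => σ (shiftP (k + 1) p)) ♯ (GK B 0 τ ♯ (τ [B.length]).sc) := by ac_rfl
lemma th_one {T : Tree} (h : 1 ≤ T.th) : ∃ T0, T = .node [T0] := by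
  obtain ⟨l⟩ := T
  rcases l with _ | ⟨t, _ | ⟨t2, l⟩⟩
  · simp [Tree.th] at h
  · exact ⟨t, rfl⟩
  · simp [Tree.th] at h

lemma key_step' (A : List Tree) (c : Tree) (C : List Tree) (T0 : Tree) (k : ℕ)
    (hA : A.length = k) (p0 : ℕ) (P1 : List ℕ) (σ τ : Sub)
    (ih : scSub.{u} (insTree (p0::P1) c T0)
        (insSub (p0::P1) c T0 (fun r => σ (k :: r)) (fun r => τ (0 :: r)))
        ♯ (σ (k :: branchVar (p0::P1) c)).sc
      ≤ scSub c (fun r => σ (k :: r)) ♯ scSub T0 (fun r => τ (0 :: r))) :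
    scSub.{u} (.node ((A ++ [insTree (p0::P1) c T0]) ++ C))
        (insSub (k::p0::P1) (.node (A ++ c :: C)) (.node [T0]) σ τ)
      ♯ (σ (k :: branchVar (p0::P1) c)).sc
      ≤ scSub (.node (A ++ c :: C)) σ ♯ scSub (.node [T0]) τ := by
  set X := insTree (p0::P1) c T0 with hX
  set ι := insSub (k::p0::P1) (.node (A ++ c :: C)) (.node [T0]) σ τ with hι
  have hconv : (A ++ [X]) ++ C = A ++ X :: C := by simp
  rw [hconv]
  have f1 : GK.{u} A 0 ι = GK A 0 σ := by
    apply GK_congr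
    intro p hp
    rcases MEMK A 0 p hp with ⟨j, hj, rfl⟩ | ⟨j, q, hj, hq, rfl⟩
    · rw [hA] at hj
      have : ι [0 + j] = σ [0 + j] := by
        rw [hι]; simp only [insSub]; rw [if_neg (by omega), if_neg (by omega)]
      rw [this]
    · rw [hA] at hj
      obtain ⟨a, q', rfl⟩ := List.exists_cons_of_ne_nil (tp_ne_nil hq)
      have : ι ((0 + j) :: a :: q') = σ ((0 + j) :: a :: q') := by
        rw [hι]; simp only [insSub]; rw [if_neg (by omega)]
      rw [this]
  have f2 : ι [k] = τ [0] := by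
    rw [hι]; simp only [insSub]; rw [if_pos trivial]
  have f3 : scSub.{u} X (fun p => ι (k :: p)) =
      scSub X (insSub (p0::P1) c T0 (fun r => σ (k :: r)) (fun r => τ (0 :: r))) := by
    rw [scSub_eq_F, scSub_eq_F]
    apply F_congr
    intro p hp
    obtain ⟨a, q', rfl⟩ := List.exists_cons_of_ne_nil (tp_ne_nil hp)
    have : ι (k :: a :: q') = insSub (p0::P1) c T0 (fun r => σ (k :: r))
        (fun r => τ (0 :: r)) (a :: q') := by
      rw [hι]; simp only [insSub]
      rw [if_pos trivial]
      have h2 : (Tree.node (A ++ c :: C)).children.getD k (.node []) = c := by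
        show (A ++ c :: C).getD k (.node []) = c
        rw [List.getD_append_right _ _ _ _ (by omega), hA.symm]
        simp
      rw [h2]
      rfl
    rw [this]
  have f4 : ι (shiftP (k + 1) [0]) = τ [1] := by
    rw [hι]
    show insSub (k::p0::P1) (.node (A ++ c :: C)) (.node [T0]) σ τ [0 + (k + 1)] = τ [1]
    simp only [insSub]
    rw [if_neg (by omega), if_pos (by omega)]
  have f5 : Rst.{u} C (fun p => ι (shiftP (k + 1) p))
      = Rst C (fun p => σ (shiftP (k + 1) p)) := by
    apply Rst_congr
    intro p hp
    rcases TAILMEM C p hp with ⟨j, hj, rfl⟩ | ⟨i, q, hq, rfl⟩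
    · have h1 : shiftP (k + 1) [j] = [j + (k + 1)] := rfl
      have h2 : ι [j + (k + 1)] = σ [j + (k + 1)] := by
        rw [hι]; simp only [insSub]; rw [if_neg (by omega), if_neg (by omega)]
      rw [h1, h2]
    · obtain ⟨a, q', rfl⟩ := List.exists_cons_of_ne_nil hq
      have h1 : shiftP (k + 1) (i :: a :: q') = (i + (k + 1)) :: a :: q' := rfl
      have h2 : ι ((i + (k + 1)) :: a :: q') = σ ((i + (k + 1)) :: a :: q') := by
        rw [hι]; simp only [insSub]; rw [if_neg (by omega)]
      rw [h1, h2]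
  rw [split3 A X C ι, split3 A c C σ, scSub_node [T0] τ, GK_cons, GK_nil, nadd_zero, hA,
    f1, f2, f3, f4, f5]
  calc ((GK A 0 σ ♯ (τ [0]).sc) ♯
          ((scSub X (insSub (p0::P1) c T0 (fun r => σ (k :: r)) (fun r => τ (0 :: r)))) ♯
            (τ [1]).sc)) ♯ Rst C (fun p => σ (shiftP (k + 1) p)) ♯
          (σ (k :: branchVar (p0::P1) c)).sc
      = ((GK A 0 σ ♯ (τ [0]).sc) ♯ ((τ [1]).sc ♯ Rst C (fun p => σ (shiftP (k + 1) p)))) ♯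
          ((scSub X (insSub (p0::P1) c T0 (fun r => σ (k :: r)) (fun r => τ (0 :: r)))) ♯
            (σ (k :: branchVar (p0::P1) c)).sc) := by ac_rfl
    _ ≤ ((GK A 0 σ ♯ (τ [0]).sc) ♯ ((τ [1]).sc ♯ Rst C (fun p => σ (shiftP (k + 1) p)))) ♯
          ((scSub c (fun r => σ (k :: r)) ♯ scSub T0 (fun r => τ (0 :: r))) ♯
            ((σ [k]).sc ♯ (σ (shiftP (k + 1) [0])).sc)) := by
        refine nadd_le_nadd_left ?_ _
        exact (ih.trans le_self_nadd)
    _ = ((GK A 0 σ ♯ (σ [k]).sc) ♯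
          ((scSub c fun p => σ (k :: p)) ♯ (σ (shiftP (k + 1) [0])).sc)) ♯
          (Rst C fun p => σ (shiftP (k + 1) p)) ♯
          (((τ [0]).sc ♯ scSub T0 fun p => τ (0 :: p)) ♯ (τ [(1:ℕ)]).sc) := by ac_rfl
lemma key : ∀ {S : Tree} {P : List ℕ}, IsBranch S P → ∀ (T : Tree) (σ τ : Sub), bh P ≤ T.th →
    scSub.{u} (insTree P S T) (insSub P S T σ τ) ♯ (σ (branchVar P S)).sc
      ≤ scSub S σ ♯ scSub T τ := by
  intro S P h
  induction h with
  | here ts k hk hlin =>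
    intro T σ τ _
    obtain ⟨B⟩ := T
    have hbv : branchVar [k] (.node ts) = k :: (ts.getD k (.node [])).maxPath := by
      rw [branchVar]; rfl
    have hins : insTree [k] (.node ts) (.node B)
        = .node ((ts.take k ++ B) ++ ts.drop (k+1)) := by rw [insTree]; rfl
    have hnode : (Tree.node ts)
        = .node (ts.take k ++ ts.getD k (.node []) :: ts.drop (k+1)) :=
      congrArg _ (ts_decomp ts k hk)
    rw [hins, hbv, hnode]
    exact key_base' _ _ _ _ k (by rw [List.length_take]; omega) σ τ
  | there ts k P hk hP hbr ih =>
    intro T σ τ hbh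
    obtain ⟨p0, P1, rfl⟩ := List.exists_cons_of_ne_nil hP
    have hth : 1 ≤ T.th := le_trans (by simp [bh]) hbh
    obtain ⟨T0, rfl⟩ := th_one hth
    have hbh' : bh (p0 :: P1) ≤ T0.th := by
      have : (Tree.node [T0]).th = T0.th + 1 := by rw [Tree.th]
      simp [bh] at hbh ⊢
      omega
    have hbv : branchVar (k :: p0 :: P1) (.node ts)
        = k :: branchVar (p0 :: P1) (ts.getD k (.node [])) := by
      rw [branchVar]
      · rfl
      · simp
    have hins : insTree (k :: p0 :: P1) (.node ts) (.node [T0])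
        = .node ((ts.take k ++ [insTree (p0 :: P1) (ts.getD k (.node [])) T0])
            ++ ts.drop (k+1)) := by
      rw [insTree]
      · rfl
      · simp
    have hnode : (Tree.node ts)
        = .node (ts.take k ++ ts.getD k (.node []) :: ts.drop (k+1)) :=
      congrArg _ (ts_decomp ts k hk)
    rw [hins, hbv, hnode]
    exact key_step' _ _ _ _ k (by rw [List.length_take]; omega) p0 P1 σ τ
      (ih T0 (fun r => σ (k :: r)) (fun r => τ (0 :: r)) hbh')
open Classical in
lemma sc_unb (T : Tree) (n : ℕ) (τ : Sub) :
    ((unbiasedCoh T n).sub τ).sc =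
      (if isIdentity (.coh T (unbiasedType T n) (fun p => (Tm.var p).sub τ)) then
        Ordinal.omega0 ^ ((unbiasedType T n).dim : Ordinal.{u})
       else Ordinal.omega0 ^ ((unbiasedType T n).dim : Ordinal)
          ♯ Ordinal.omega0 ^ ((unbiasedType T n).dim : Ordinal)) ♯ scSub T τ := rfl

theorem insertion_sc_lt' (S T : Tree) (P : List ℕ) (σ τ : Sub)
    (h : InsRedex S P T σ τ) :
    scSub.{u} (insTree P S T) (insSub P S T σ τ) < scSub S σ := by
  obtain ⟨⟨hbr, hbh⟩, heqv⟩ := h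
  have hkey := key.{u} hbr T σ τ hbh
  have h1 : ((σ (branchVar P S)).sc : Ordinal.{u}) = ((unbiasedCoh T (lh P S)).sub τ).sc :=
    sc_eqv heqv
  rw [sc_unb] at h1
  have h3 : scSub.{u} T τ < (σ (branchVar P S)).sc := by
    rcases Classical.em (isIdentity
        (Tm.coh T (unbiasedType T (lh P S)) fun p => (Tm.var p).sub τ)) with hid | hid
    · rw [h1, if_pos hid]
      calc scSub.{u} T τ = 0 ♯ scSub T τ := (Ordinal.zero_nadd _).symm
        _ < _ := Ordinal.nadd_lt_nadd_right (Ordinal.opow_pos _ Ordinal.omega0_pos) _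
    · rw [h1, if_neg hid]
      calc scSub.{u} T τ = 0 ♯ scSub T τ := (Ordinal.zero_nadd _).symm
        _ < _ := Ordinal.nadd_lt_nadd_right
          (lt_of_lt_of_le (Ordinal.opow_pos _ Ordinal.omega0_pos) le_self_nadd) _
  exact lt_of_nadd_lt_nadd_right (lt_of_lt_of_le (nadd_lt_nadd_left h3 _) hkey)

/-- For any insertion redex `(S,P,T,Γ,σ,τ)`, syntactic
complexity strictly decreases under insertion of arguments:
`sc(σ≪P,τ≫) < sc(σ)`. -/
theorem insertion_sc_lt (S T : Tree) (P : List ℕ) (σ τ : Sub)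
    (h : InsRedex S P T σ τ) :
    scSub (insTree P S T) (insSub P S T σ τ) < scSub S σ := by
  exact insertion_sc_lt' S T P σ τ h

end Catt
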